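/- Let g: ℕ → ℝ be additive with g(0) := 0, let 𝓑(X) := {n ≤ X : g(n) < g(n−1)}. Then (1/X) ∑_{n ≤ X} |g(n) − g(n−1)| ≪ ( (|𝓑(X)|/X)^{1/2} + (log X)/√X ) · B_g(X), with an absolute implied constant. -/

import Mathlib

open Finset

/-- The set of prime powers `p^k ≤ Y` (as natural numbers `≥ 2`). -/
noncomputable def ppows (Y : ℝ) : Finset ℕ :=
  (Finset.Icc 2 ⌊Y⌋₊).filter IsPrimePow

/-- `A_g(Y) = ∑_{p^k ≤ Y} g(p^k) p^{-k} (1 - 1/p)` for real-valued `g`. -/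
noncomputable def AgR (g : ℕ → ℝ) (Y : ℝ) : ℝ :=
  ∑ q ∈ ppows Y, g q * (1 / (q : ℝ)) * (1 - 1 / ((q.minFac : ℝ)))

/-- `B_g(Y) = (∑_{p^k ≤ Y} g(p^k)² p^{-k})^{1/2}` for real-valued `g`. -/
noncomputable def BgR (g : ℕ → ℝ) (Y : ℝ) : ℝ :=
  Real.sqrt (∑ q ∈ ppows Y, (g q) ^ 2 / (q : ℝ))

/-- `g` is additive: `g(mn) = g(m) + g(n)` whenever `gcd(m,n) = 1`. -/
def IsAdditiveR (g : ℕ → ℝ) : Prop :=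
  ∀ m n : ℕ, Nat.Coprime m n → g (m * n) = g m + g n


namespace S7

def PP (N : ℕ) : Finset ℕ := (Finset.Icc 2 N).filter IsPrimePow

noncomputable def ee (q n : ℕ) : ℝ :=
  (if q ∣ n then (1:ℝ) else 0) - (if q * q.minFac ∣ n then (1:ℝ) else 0)

noncomputable def D (N m : ℕ) : ℝ := ((N / m : ℕ) : ℝ)

noncomputable def rho (q : ℕ) : ℝ := (1/(q:ℝ)) * (1 - 1/(q.minFac : ℝ))

variable {g : ℕ → ℝ}

lemma g_one (hg : IsAdditiveR g) : g 1 = 0 := by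
  have := hg 1 1 (Nat.coprime_one_left 1)
  simp at this; linarith

lemma g_factor (hg : IsAdditiveR g) {n : ℕ} (hn : n ≠ 0) :
    g n = ∑ p ∈ n.primeFactors, g (p ^ n.factorization p) := by
  have := Nat.multiplicative_factorization (fun m => Multiplicative.ofAdd (g m))
    (fun x y h => by rw [hg x y h, ofAdd_add]) (by simp [g_one hg]) hn
  have h2 := congrArg Multiplicative.toAdd this
  simpa [Finsupp.prod, Nat.support_factorization] using h2

lemma pp_minFac_prime {q : ℕ} (hq : IsPrimePow q) : q.minFac.Prime :=
  Nat.minFac_prime (by have := hq.two_le; omega)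

/-- structure: q = p^k with p = minFac, k ≥ 1 -/
lemma pp_struct {q : ℕ} (hq : IsPrimePow q) :
    ∃ k, 0 < k ∧ q = q.minFac ^ k := by
  obtain ⟨p, k, hp, hk, rfl⟩ := hq
  rw [← Nat.prime_iff] at hp
  exact ⟨k, hk, by rw [hp.pow_minFac hk.ne']⟩

lemma ee_eq_ite (q n : ℕ) :
    ee q n = if q ∣ n ∧ ¬ (q * q.minFac ∣ n) then 1 else 0 := by
  unfold ee
  by_cases h1 : q * q.minFac ∣ n
  · have : q ∣ n := dvd_trans (Dvd.intro _ rfl) h1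
    simp [h1, this]
  · by_cases h2 : q ∣ n <;> simp [h1, h2]

lemma ee_nonneg (q n : ℕ) : 0 ≤ ee q n := by
  rw [ee_eq_ite]; positivity

lemma ee_le_one (q n : ℕ) : ee q n ≤ 1 := by
  rw [ee_eq_ite]; split <;> norm_num

lemma ee_sq (q n : ℕ) : ee q n * ee q n = ee q n := by
  rw [ee_eq_ite]; split <;> norm_num

lemma ee_le_ind (q n : ℕ) : ee q n ≤ (if q ∣ n then (1:ℝ) else 0) := by
  rw [ee_eq_ite]
  by_cases h : q ∣ n <;> by_cases h2 : q * q.minFac ∣ n <;> simp [h, h2]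

end S7
namespace S7
variable {g : ℕ → ℝ}

lemma sum_ind (N a : ℕ) :
    ∑ n ∈ Finset.Icc 1 N, (if a ∣ n then (1:ℝ) else 0) = D N a := by
  have h1 : Finset.Icc 1 N = Finset.Ioc 0 N := rfl
  rw [Finset.sum_boole, h1, D, Nat.Ioc_filter_dvd_card_eq_div]

lemma D_nonneg (N m : ℕ) : 0 ≤ D N m := by unfold D; positivity

lemma D_le (N m : ℕ) : D N m ≤ (N:ℝ)/m := Nat.cast_div_le

lemma D_ge (N m : ℕ) (hm : m ≠ 0) : (N:ℝ)/m - 1 ≤ D N m := by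
  have hm' : (0:ℝ) < (m:ℝ) := by positivity
  rw [sub_le_iff_le_add, div_le_iff₀ hm']
  have h := Nat.div_add_mod N m
  have h2 : N % m < m := Nat.mod_lt _ (by omega)
  unfold D
  have hc : (m:ℝ) * ((N/m:ℕ):ℝ) + ((N%m:ℕ):ℝ) = (N:ℝ) := by exact_mod_cast h
  have hc2 : ((N%m:ℕ):ℝ) < (m:ℝ) := by exact_mod_cast h2
  nlinarith [hc, hc2]

lemma D_mono (N : ℕ) {a b : ℕ} (h : a ≤ b) (ha : a ≠ 0) : D N b ≤ D N a := by
  exact_mod_cast Nat.cast_le.mpr (Nat.div_le_div_left h (by omega))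

lemma ind_mul_ind (a b n : ℕ) (h : Nat.Coprime a b) :
    (if a ∣ n then (1:ℝ) else 0) * (if b ∣ n then (1:ℝ) else 0)
      = if a * b ∣ n then (1:ℝ) else 0 := by
  by_cases ha : a ∣ n <;> by_cases hb : b ∣ n
  · simp [ha, hb, h.mul_dvd_of_dvd_of_dvd ha hb]
  · have : ¬ (a * b ∣ n) := fun hab => hb (dvd_trans (Dvd.intro_left a rfl) hab)
    simp [ha, hb, this]
  · have : ¬ (a * b ∣ n) := fun hab => ha (dvd_trans (Dvd.intro b rfl) hab)
    simp [ha, hb, this]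
  · have : ¬ (a * b ∣ n) := fun hab => ha (dvd_trans (Dvd.intro b rfl) hab)
    simp [ha, hb, this]

lemma sum_ee (N q : ℕ) :
    ∑ n ∈ Finset.Icc 1 N, ee q n = D N q - D N (q * q.minFac) := by
  unfold ee
  rw [Finset.sum_sub_distrib, sum_ind, sum_ind]

lemma sum_ee_nonneg (N q : ℕ) : 0 ≤ ∑ n ∈ Finset.Icc 1 N, ee q n :=
  Finset.sum_nonneg fun n _ => ee_nonneg q n

lemma sum_ee_le (N q : ℕ) : ∑ n ∈ Finset.Icc 1 N, ee q n ≤ (N:ℝ)/q := by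
  rw [sum_ee]
  have := D_nonneg N (q * q.minFac)
  have := D_le N q
  linarith

lemma sum_ee_sq_le (N q : ℕ) : ∑ n ∈ Finset.Icc 1 N, ee q n * ee q n ≤ (N:ℝ)/q := by
  calc ∑ n ∈ Finset.Icc 1 N, ee q n * ee q n = ∑ n ∈ Finset.Icc 1 N, ee q n := by
        simp_rw [ee_sq]
    _ ≤ (N:ℝ)/q := sum_ee_le N q

end S7
namespace S7
variable {g : ℕ → ℝ}

lemma mem_PP {N q : ℕ} : q ∈ PP N ↔ (2 ≤ q ∧ q ≤ N ∧ IsPrimePow q) := by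
  unfold PP
  simp [Finset.mem_filter, Finset.mem_Icc]
  tauto

/-- the set of exact prime-power divisors of n within PP N -/
lemma exact_filter_eq {N n : ℕ} (hn : n ≠ 0) (hnN : n ≤ N) :
    (PP N).filter (fun q => q ∣ n ∧ ¬ (q * q.minFac ∣ n))
      = n.primeFactors.image (fun p => p ^ n.factorization p) := by
  ext q
  simp only [Finset.mem_filter, Finset.mem_image, Nat.mem_primeFactors, mem_PP]
  constructor
  · rintro ⟨⟨h2, hN, hq⟩, hdvd, hndvd⟩
    obtain ⟨k, hk, hqe⟩ := pp_struct hq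
    have hp : q.minFac.Prime := pp_minFac_prime hq
    refine ⟨q.minFac, ⟨hp, dvd_trans (Nat.minFac_dvd q) hdvd, hn⟩, ?_⟩
    have hkle : k ≤ n.factorization q.minFac :=
      (hp.pow_dvd_iff_le_factorization hn).mp (hqe ▸ hdvd)
    have hklt : ¬ (k + 1 ≤ n.factorization q.minFac) := by
      intro hcon
      have hqq : q * q.minFac = q.minFac ^ (k+1) := by
        rw [pow_succ]
        exact congrArg (· * q.minFac) hqe
      exact hndvd (hqq ▸ ((hp.pow_dvd_iff_le_factorization hn).mpr hcon))
    have : k = n.factorization q.minFac := by omega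
    rw [← this, ← hqe]
  · rintro ⟨p, ⟨hp, hpn, -⟩, rfl⟩
    have hv : 0 < n.factorization p := hp.factorization_pos_of_dvd hn hpn
    have hdvd : p ^ n.factorization p ∣ n := Nat.ordProj_dvd n p
    have hminFac : (p ^ n.factorization p).minFac = p := hp.pow_minFac hv.ne'
    refine ⟨⟨?_, ?_, ?_⟩, hdvd, ?_⟩
    · calc 2 ≤ p := hp.two_le
        _ = p ^ 1 := (pow_one p).symm
        _ ≤ p ^ n.factorization p := Nat.pow_le_pow_right hp.pos hv
    · exact le_trans (Nat.le_of_dvd (by omega) hdvd) hnN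
    · exact ⟨p, n.factorization p, Nat.prime_iff.mp hp, hv, rfl⟩
    · rw [hminFac, ← pow_succ]
      exact Nat.pow_succ_factorization_not_dvd hn hp

lemma g_decomp (hg : IsAdditiveR g) {N n : ℕ} (hn : n ≠ 0) (hnN : n ≤ N) :
    g n = ∑ q ∈ PP N, g q * ee q n := by
  have h1 : ∑ q ∈ PP N, g q * ee q n
      = ∑ q ∈ (PP N).filter (fun q => q ∣ n ∧ ¬ (q * q.minFac ∣ n)), g q := by
    rw [Finset.sum_filter]
    congr 1; ext q
    rw [ee_eq_ite]
    split <;> simp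
  rw [h1, exact_filter_eq hn hnN, Finset.sum_image ?inj]
  · exact g_factor hg hn
  · intro p hp p' hp' he
    simp only [Finset.mem_coe, Nat.mem_primeFactors] at hp hp'
    have h1 : 0 < n.factorization p := hp.1.factorization_pos_of_dvd hn hp.2.1
    have h2 : 0 < n.factorization p' := hp'.1.factorization_pos_of_dvd hn hp'.2.1
    have := congrArg Nat.minFac he
    rwa [hp.1.pow_minFac h1.ne', hp'.1.pow_minFac h2.ne'] at this

/-- sum of a finset of naturals each ≥ 2 is at most their product -/
lemma sum_le_prod_of_two_le {s : Finset ℕ} {f : ℕ → ℕ} (hf : ∀ p ∈ s, 2 ≤ f p) :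
    ∑ p ∈ s, f p ≤ ∏ p ∈ s, f p := by
  induction s using Finset.induction with
  | empty => simp
  | insert a s hnotmem ih =>
    rw [Finset.sum_insert hnotmem, Finset.prod_insert hnotmem]
    rcases Finset.eq_empty_or_nonempty s with rfl | hs
    · simp
    · have h2 : 2 ≤ ∏ p ∈ s, f p := by
        obtain ⟨b, hb⟩ := hs
        calc 2 ≤ f b := hf b (Finset.mem_insert_of_mem hb)
          _ ≤ ∏ p ∈ s, f p := Finset.single_le_prod'
              (fun i hi => le_trans one_le_two (hf i (Finset.mem_insert_of_mem hi))) hb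
      have ha : 2 ≤ f a := hf a (Finset.mem_insert_self a s)
      have hsum : ∑ p ∈ s, f p ≤ ∏ p ∈ s, f p :=
        ih (fun p hp => hf p (Finset.mem_insert_of_mem hp))
      nlinarith
end S7
namespace S7
variable {g : ℕ → ℝ}

lemma pf_inj {n : ℕ} (hn : n ≠ 0) : ∀ p ∈ n.primeFactors, ∀ p' ∈ n.primeFactors,
    p ^ n.factorization p = p' ^ n.factorization p' → p = p' := by
  intro p hp p' hp' he
  simp only [Nat.mem_primeFactors] at hp hp'
  have h1 : 0 < n.factorization p := hp.1.factorization_pos_of_dvd hn hp.2.1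
  have h2 : 0 < n.factorization p' := hp'.1.factorization_pos_of_dvd hn hp'.2.1
  have := congrArg Nat.minFac he
  rwa [hp.1.pow_minFac h1.ne', hp'.1.pow_minFac h2.ne'] at this

/-- sum of exact prime power divisors is at most n -/
lemma sum_exact_le {n : ℕ} (hn : n ≠ 0) :
    ∑ p ∈ n.primeFactors, p ^ n.factorization p ≤ n := by
  calc ∑ p ∈ n.primeFactors, p ^ n.factorization p
      ≤ ∏ p ∈ n.primeFactors, p ^ n.factorization p := by
        apply sum_le_prod_of_two_le
        intro p hp
        have hpp := Nat.prime_of_mem_primeFactors hp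
        have hv : 0 < n.factorization p :=
          hpp.factorization_pos_of_dvd hn (Nat.dvd_of_mem_primeFactors hp)
        calc 2 ≤ p := hpp.two_le
          _ = p ^ 1 := (pow_one p).symm
          _ ≤ p ^ n.factorization p := Nat.pow_le_pow_right hpp.pos hv
    _ = n := by
        rw [← Nat.support_factorization]
        exact Nat.factorization_prod_pow_eq_self hn

/-- pointwise bound |g n| ≤ B √n -/
lemma g_point_bound (hg : IsAdditiveR g) {N n : ℕ} (hn : n ≠ 0) (hnN : n ≤ N) :
    |g n| ≤ Real.sqrt (∑ q ∈ PP N, g q ^ 2 / q) * Real.sqrt n := by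
  set s := n.primeFactors.image (fun p => p ^ n.factorization p) with hs
  have hsub : s ⊆ PP N := by
    rw [hs, ← exact_filter_eq hn hnN]
    exact Finset.filter_subset _ _
  have hgn : g n = ∑ q ∈ s, g q := by
    rw [hs, Finset.sum_image ?inj]
    · exact g_factor hg hn
    case inj =>
      intro p hp p' hp' he
      simp only [Finset.mem_coe, Nat.mem_primeFactors] at hp hp'
      have h1 : 0 < n.factorization p := hp.1.factorization_pos_of_dvd hn hp.2.1
      have h2 : 0 < n.factorization p' := hp'.1.factorization_pos_of_dvd hn hp'.2.1
      have := congrArg Nat.minFac he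
      rwa [hp.1.pow_minFac h1.ne', hp'.1.pow_minFac h2.ne'] at this
  have hqpos : ∀ q ∈ s, (0:ℝ) < q := by
    intro q hq
    have := mem_PP.mp (hsub hq)
    have : 2 ≤ q := this.1
    positivity
  -- Cauchy-Schwarz
  have hCS : (∑ q ∈ s, g q) ^ 2 ≤ (∑ q ∈ s, g q ^ 2 / q) * (∑ q ∈ s, (q:ℝ)) := by
    have := Finset.sum_mul_sq_le_sq_mul_sq s (fun q => g q / Real.sqrt q)
      (fun q => Real.sqrt q)
    have heq : ∀ q ∈ s, g q / Real.sqrt q * Real.sqrt q = g q := by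
      intro q hq
      have := hqpos q hq
      field_simp
    rw [Finset.sum_congr rfl heq] at this
    refine this.trans (le_of_eq ?_)
    congr 1
    · apply Finset.sum_congr rfl
      intro q hq
      rw [div_pow, Real.sq_sqrt (hqpos q hq).le]
    · apply Finset.sum_congr rfl
      intro q hq
      rw [Real.sq_sqrt (hqpos q hq).le]
  have hsum_q : (∑ q ∈ s, (q:ℝ)) ≤ (n:ℝ) := by
    have : ∑ q ∈ s, q ≤ n := by
      rw [hs]
      calc ∑ q ∈ n.primeFactors.image (fun p => p ^ n.factorization p), q
          = ∑ p ∈ n.primeFactors, p ^ n.factorization p :=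
            Finset.sum_image (pf_inj hn)
        _ ≤ n := sum_exact_le hn
    calc (∑ q ∈ s, (q:ℝ)) = ((∑ q ∈ s, q : ℕ) : ℝ) := by push_cast; rfl
      _ ≤ (n:ℝ) := by exact_mod_cast this
  have hB2 : (∑ q ∈ s, g q ^ 2 / q) ≤ ∑ q ∈ PP N, g q ^ 2 / q := by
    apply Finset.sum_le_sum_of_subset_of_nonneg hsub
    intro q hq _
    have h2 : 2 ≤ q := (mem_PP.mp hq).1
    positivity
  have hfin : (g n) ^ 2 ≤ (∑ q ∈ PP N, g q ^ 2 / q) * n := by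
    rw [hgn]
    refine hCS.trans ?_
    apply mul_le_mul hB2 hsum_q (Finset.sum_nonneg (fun q hq => (hqpos q hq).le))
    exact Finset.sum_nonneg fun q hq => by
      have h2 : 2 ≤ q := (mem_PP.mp hq).1
      positivity
  calc |g n| = Real.sqrt ((g n)^2) := (Real.sqrt_sq_eq_abs _).symm
    _ ≤ Real.sqrt ((∑ q ∈ PP N, g q ^ 2 / q) * n) := Real.sqrt_le_sqrt hfin
    _ = Real.sqrt (∑ q ∈ PP N, g q ^ 2 / q) * Real.sqrt n := Real.sqrt_mul
        (Finset.sum_nonneg fun q hq => by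
          have h2 : 2 ≤ q := (mem_PP.mp hq).1
          positivity) n

end S7
namespace S7
variable {g : ℕ → ℝ}

lemma rho_bounds {q : ℕ} (hq : IsPrimePow q) : 0 ≤ rho q ∧ rho q ≤ 1/(q:ℝ) := by
  have hp := pp_minFac_prime hq
  have h2 : (2:ℝ) ≤ q.minFac := by exact_mod_cast hp.two_le
  have hq2 : (2:ℝ) ≤ q := by exact_mod_cast hq.two_le
  unfold rho
  constructor
  · apply mul_nonneg (by positivity)
    have : 1/(q.minFac:ℝ) ≤ 1 := by
      rw [div_le_one (by linarith)]; linarith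
    linarith
  · have h3 : (1 - 1/(q.minFac:ℝ)) ≤ 1 := by
      have : 0 < 1/(q.minFac:ℝ) := by positivity
      linarith
    calc (1/(q:ℝ)) * (1 - 1/(q.minFac:ℝ)) ≤ (1/(q:ℝ)) * 1 :=
        mul_le_mul_of_nonneg_left h3 (by positivity)
      _ = 1/(q:ℝ) := mul_one _

lemma rho_le_one {q : ℕ} (hq : IsPrimePow q) : rho q ≤ 1 := by
  have hq2 : (2:ℝ) ≤ q := by exact_mod_cast hq.two_le
  refine (rho_bounds hq).2.trans ?_
  rw [div_le_one (by linarith)]; linarith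

lemma ee_mul_ee_same {q q' n : ℕ} (hq : IsPrimePow q) (hq' : IsPrimePow q')
    (hne : q ≠ q') (hmf : q'.minFac = q.minFac) : ee q n * ee q' n = 0 := by
  rw [ee_eq_ite, ee_eq_ite]
  by_cases h1 : q ∣ n ∧ ¬ (q * q.minFac ∣ n)
  · by_cases h2 : q' ∣ n ∧ ¬ (q' * q'.minFac ∣ n)
    · exfalso
      obtain ⟨k, hk, hqe⟩ := pp_struct hq
      obtain ⟨k', hk', hqe'⟩ := pp_struct hq'
      rw [hmf] at hqe'
      have hkk : k ≠ k' := fun h => hne (by rw [hqe, hqe', h])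
      rcases Nat.lt_or_ge k k' with hlt | hge
      · apply h1.2
        have : q * q.minFac = q.minFac ^ (k+1) := by
          rw [pow_succ]; exact congrArg (· * q.minFac) hqe
        rw [this]
        exact dvd_trans (pow_dvd_pow _ (by omega)) (hqe' ▸ h2.1)
      · apply h2.2
        have : q' * q'.minFac = q.minFac ^ (k'+1) := by
          rw [pow_succ, hmf]; exact congrArg (· * q.minFac) hqe'
        rw [this]
        exact dvd_trans (pow_dvd_pow _ (by omega)) (hqe ▸ h1.1)
    · simp [h1, h2]
  · simp [h1]

lemma pp_pow_coprime {q q' : ℕ} (hq : IsPrimePow q) (hq' : IsPrimePow q')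
    (hmf : q.minFac ≠ q'.minFac) {i j : ℕ} :
    Nat.Coprime (q.minFac ^ i) (q'.minFac ^ j) :=
  Nat.Coprime.pow _ _ ((Nat.coprime_primes (pp_minFac_prime hq) (pp_minFac_prime hq')).mpr hmf)

lemma cov_expand (N q q' : ℕ) :
    ∑ n ∈ Finset.Icc 1 N, (ee q n - rho q) * (ee q' n - rho q')
    = (∑ n ∈ Finset.Icc 1 N, ee q n * ee q' n)
      - rho q' * (∑ n ∈ Finset.Icc 1 N, ee q n)
      - rho q * (∑ n ∈ Finset.Icc 1 N, ee q' n) + rho q * rho q' * N := by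
  have hcard : (Finset.Icc 1 N).card = N := by rw [Nat.card_Icc]; omega
  calc ∑ n ∈ Finset.Icc 1 N, (ee q n - rho q) * (ee q' n - rho q')
      = ∑ n ∈ Finset.Icc 1 N, (ee q n * ee q' n - rho q' * ee q n
          - rho q * ee q' n + rho q * rho q') := by
        apply Finset.sum_congr rfl; intros; ring
    _ = _ := by
        rw [Finset.sum_add_distrib, Finset.sum_sub_distrib, Finset.sum_sub_distrib,
          ← Finset.mul_sum, ← Finset.mul_sum, Finset.sum_const, hcard, nsmul_eq_mul]
        ring

/-- diagonal covariance -/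
lemma cov_diag (N : ℕ) {q : ℕ} (hq : IsPrimePow q) :
    ∑ n ∈ Finset.Icc 1 N, (ee q n - rho q) * (ee q n - rho q) ≤ 2*N/q := by
  have hq2 : (2:ℝ) ≤ q := by exact_mod_cast hq.two_le
  have h0 := (rho_bounds hq).1
  have h1 := (rho_bounds hq).2
  rw [cov_expand]
  have hee := sum_ee_sq_le N q
  have hee1 := sum_ee_le N q
  have hee0 := sum_ee_nonneg N q
  have hrr : rho q * rho q * N ≤ (N:ℝ)/q := by
    have : rho q * rho q ≤ (1/q) * 1 := by
      apply mul_le_mul h1 (rho_le_one hq) h0 (by positivity)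
    calc rho q * rho q * N ≤ (1/(q:ℝ)) * 1 * N :=
          mul_le_mul_of_nonneg_right this (by positivity)
      _ = (N:ℝ)/q := by ring
  have hmid : 0 ≤ rho q * (∑ n ∈ Finset.Icc 1 N, ee q n) := mul_nonneg h0 hee0
  have : 2*(N:ℝ)/q = (N:ℝ)/q + (N:ℝ)/q := by ring
  rw [this]
  linarith

/-- same-prime off-diagonal covariance -/
lemma cov_same (N : ℕ) {q q' : ℕ} (hq : IsPrimePow q) (hq' : IsPrimePow q')
    (hne : q ≠ q') (hmf : q'.minFac = q.minFac) :
    |∑ n ∈ Finset.Icc 1 N, (ee q n - rho q) * (ee q' n - rho q')| ≤ 3*N/(q*q') := by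
  have hq2 : (2:ℝ) ≤ q := by exact_mod_cast hq.two_le
  have hq'2 : (2:ℝ) ≤ q' := by exact_mod_cast hq'.two_le
  rw [cov_expand]
  have hzero : ∑ n ∈ Finset.Icc 1 N, ee q n * ee q' n = 0 := by
    apply Finset.sum_eq_zero
    intro n _
    exact ee_mul_ee_same hq hq' hne hmf
  rw [hzero]
  have h0 := (rho_bounds hq).1
  have h1 := (rho_bounds hq).2
  have h0' := (rho_bounds hq').1
  have h1' := (rho_bounds hq').2
  have hee1 := sum_ee_le N q
  have hee0 := sum_ee_nonneg N q
  have hee1' := sum_ee_le N q'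
  have hee0' := sum_ee_nonneg N q'
  have hb1 : rho q' * (∑ n ∈ Finset.Icc 1 N, ee q n) ≤ (N:ℝ)/(q*q') := by
    calc rho q' * (∑ n ∈ Finset.Icc 1 N, ee q n) ≤ (1/(q':ℝ)) * ((N:ℝ)/q) :=
          mul_le_mul h1' hee1 hee0 (by positivity)
      _ = (N:ℝ)/(q*q') := by push_cast; ring
  have hb1' : 0 ≤ rho q' * (∑ n ∈ Finset.Icc 1 N, ee q n) := mul_nonneg h0' hee0
  have hb2 : rho q * (∑ n ∈ Finset.Icc 1 N, ee q' n) ≤ (N:ℝ)/(q*q') := by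
    calc rho q * (∑ n ∈ Finset.Icc 1 N, ee q' n) ≤ (1/(q:ℝ)) * ((N:ℝ)/q') :=
          mul_le_mul h1 hee1' hee0' (by positivity)
      _ = (N:ℝ)/(q*q') := by push_cast; ring
  have hb2' : 0 ≤ rho q * (∑ n ∈ Finset.Icc 1 N, ee q' n) := mul_nonneg h0 hee0'
  have hb3 : rho q * rho q' * N ≤ (N:ℝ)/(q*q') := by
    calc rho q * rho q' * N ≤ (1/(q:ℝ)) * (1/(q':ℝ)) * N := by
          apply mul_le_mul_of_nonneg_right _ (by positivity)
          exact mul_le_mul h1 h1' h0' (by positivity)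
      _ = (N:ℝ)/(q*q') := by push_cast; ring
  have hb3' : 0 ≤ rho q * rho q' * N := by positivity
  rw [abs_le]
  constructor
  · have : 3*(N:ℝ)/(q*q') = (N:ℝ)/(q*q') + (N:ℝ)/(q*q') + (N:ℝ)/(q*q') := by ring
    rw [this]; push_cast; nlinarith
  · have : 3*(N:ℝ)/(q*q') = (N:ℝ)/(q*q') + (N:ℝ)/(q*q') + (N:ℝ)/(q*q') := by ring
    rw [this]; push_cast; nlinarith
end S7
namespace S7
variable {g : ℕ → ℝ}

noncomputable def del (N m : ℕ) : ℝ := (N:ℝ)/(m:ℝ) - D N m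

lemma del_mem (N : ℕ) {m : ℕ} (hm : m ≠ 0) : 0 ≤ del N m ∧ del N m ≤ 1 := by
  constructor
  · have := D_le N m; unfold del; linarith
  · have := D_ge N m hm; unfold del; linarith

lemma D_eq_del (N m : ℕ) : D N m = (N:ℝ)/(m:ℝ) - del N m := by unfold del; ring

lemma sum_ee_mul_ee_diff (N : ℕ) {q q' : ℕ} (hq : IsPrimePow q) (hq' : IsPrimePow q')
    (hmf : q.minFac ≠ q'.minFac) :
    ∑ n ∈ Finset.Icc 1 N, ee q n * ee q' n
      = D N (q*q') - D N (q*(q'*q'.minFac)) - D N ((q*q.minFac)*q')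
        + D N ((q*q.minFac)*(q'*q'.minFac)) := by
  obtain ⟨k, hk, hqe⟩ := pp_struct hq
  obtain ⟨k', hk', hqe'⟩ := pp_struct hq'
  have e1 : q * q.minFac = q.minFac ^ (k+1) := by
    rw [pow_succ]; exact congrArg (· * q.minFac) hqe
  have e1' : q' * q'.minFac = q'.minFac ^ (k'+1) := by
    rw [pow_succ]; exact congrArg (· * q'.minFac) hqe'
  have c11 : Nat.Coprime q q' := by
    rw [hqe, hqe']; exact pp_pow_coprime hq hq' hmf
  have c12 : Nat.Coprime q (q'*q'.minFac) := by
    rw [hqe, e1']; exact pp_pow_coprime hq hq' hmf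
  have c21 : Nat.Coprime (q*q.minFac) q' := by
    rw [e1, hqe']; exact pp_pow_coprime hq hq' hmf
  have c22 : Nat.Coprime (q*q.minFac) (q'*q'.minFac) := by
    rw [e1, e1']; exact pp_pow_coprime hq hq' hmf
  have hpt : ∀ n, ee q n * ee q' n
      = (if q*q' ∣ n then (1:ℝ) else 0) - (if q*(q'*q'.minFac) ∣ n then (1:ℝ) else 0)
        - (if (q*q.minFac)*q' ∣ n then (1:ℝ) else 0)
        + (if (q*q.minFac)*(q'*q'.minFac) ∣ n then (1:ℝ) else 0) := by
    intro n
    unfold ee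
    rw [sub_mul, mul_sub, mul_sub, ind_mul_ind _ _ _ c11, ind_mul_ind _ _ _ c12,
      ind_mul_ind _ _ _ c21, ind_mul_ind _ _ _ c22]
    ring
  simp_rw [hpt]
  rw [Finset.sum_add_distrib, Finset.sum_sub_distrib, Finset.sum_sub_distrib,
    sum_ind, sum_ind, sum_ind, sum_ind]

lemma cov_diff (N : ℕ) {q q' : ℕ} (hq : IsPrimePow q) (hq' : IsPrimePow q')
    (hmf : q.minFac ≠ q'.minFac) :
    |∑ n ∈ Finset.Icc 1 N, (ee q n - rho q) * (ee q' n - rho q')| ≤ 8 := by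
  have hp := pp_minFac_prime hq
  have hp' := pp_minFac_prime hq'
  have hq0 : q ≠ 0 := by have := hq.two_le; omega
  have hq'0 : q' ≠ 0 := by have := hq'.two_le; omega
  have hp0 : q.minFac ≠ 0 := hp.pos.ne'
  have hp'0 : q'.minFac ≠ 0 := hp'.pos.ne'
  rw [cov_expand, sum_ee_mul_ee_diff N hq hq' hmf, sum_ee, sum_ee]
  rw [D_eq_del N (q*q'), D_eq_del N (q*(q'*q'.minFac)), D_eq_del N ((q*q.minFac)*q'),
    D_eq_del N ((q*q.minFac)*(q'*q'.minFac)), D_eq_del N q, D_eq_del N (q*q.minFac),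
    D_eq_del N q', D_eq_del N (q'*q'.minFac)]
  have hz :
      ((N:ℝ)/(↑(q*q')) - del N (q*q')) - ((N:ℝ)/(↑(q*(q'*q'.minFac))) - del N (q*(q'*q'.minFac)))
        - ((N:ℝ)/(↑((q*q.minFac)*q')) - del N ((q*q.minFac)*q'))
        + ((N:ℝ)/(↑((q*q.minFac)*(q'*q'.minFac))) - del N ((q*q.minFac)*(q'*q'.minFac)))
        - rho q' * (((N:ℝ)/q - del N q) - ((N:ℝ)/(↑(q*q.minFac)) - del N (q*q.minFac)))
        - rho q * (((N:ℝ)/q' - del N q') - ((N:ℝ)/(↑(q'*q'.minFac)) - del N (q'*q'.minFac)))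
        + rho q * rho q' * N
      = - del N (q*q') + del N (q*(q'*q'.minFac)) + del N ((q*q.minFac)*q')
        - del N ((q*q.minFac)*(q'*q'.minFac))
        + rho q' * del N q - rho q' * del N (q*q.minFac)
        + rho q * del N q' - rho q * del N (q'*q'.minFac) := by
    unfold rho
    push_cast
    have h1 : (q:ℝ) ≠ 0 := by exact_mod_cast hq0
    have h2 : (q':ℝ) ≠ 0 := by exact_mod_cast hq'0
    have h3 : (q.minFac:ℝ) ≠ 0 := by exact_mod_cast hp0
    have h4 : (q'.minFac:ℝ) ≠ 0 := by exact_mod_cast hp'0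
    field_simp
    ring
  rw [hz]
  -- now bound the eight atoms
  have d1 := del_mem N (by positivity : q*q' ≠ 0)
  have d2 := del_mem N (by positivity : q*(q'*q'.minFac) ≠ 0)
  have d3 := del_mem N (by positivity : (q*q.minFac)*q' ≠ 0)
  have d4 := del_mem N (by positivity : (q*q.minFac)*(q'*q'.minFac) ≠ 0)
  have d5 := del_mem N hq0
  have d6 := del_mem N (by positivity : q*q.minFac ≠ 0)
  have d7 := del_mem N hq'0
  have d8 := del_mem N (by positivity : q'*q'.minFac ≠ 0)
  have r0 := (rho_bounds hq).1
  have r1 := rho_le_one hq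
  have r0' := (rho_bounds hq').1
  have r1' := rho_le_one hq'
  have m5 : 0 ≤ rho q' * del N q ∧ rho q' * del N q ≤ 1 :=
    ⟨mul_nonneg r0' d5.1, mul_le_one₀ r1' d5.1 d5.2⟩
  have m6 : 0 ≤ rho q' * del N (q*q.minFac) ∧ rho q' * del N (q*q.minFac) ≤ 1 :=
    ⟨mul_nonneg r0' d6.1, mul_le_one₀ r1' d6.1 d6.2⟩
  have m7 : 0 ≤ rho q * del N q' ∧ rho q * del N q' ≤ 1 :=
    ⟨mul_nonneg r0 d7.1, mul_le_one₀ r1 d7.1 d7.2⟩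
  have m8 : 0 ≤ rho q * del N (q'*q'.minFac) ∧ rho q * del N (q'*q'.minFac) ≤ 1 :=
    ⟨mul_nonneg r0 d8.1, mul_le_one₀ r1 d8.1 d8.2⟩
  rw [abs_le]
  constructor <;> linarith [d1.1, d1.2, d2.1, d2.2, d3.1, d3.2, d4.1, d4.2,
    m5.1, m5.2, m6.1, m6.2, m7.1, m7.2, m8.1, m8.2]
end S7
namespace S7
variable {g : ℕ → ℝ}

lemma geom_half (K : ℕ) : ∑ k ∈ Finset.Icc 1 K, (1/2:ℝ)^k = 1 - (1/2:ℝ)^K := by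
  induction K with
  | zero => simp
  | succ K ih =>
    rw [Finset.sum_Icc_succ_top (by omega), ih]
    ring

/-- sum of reciprocals of distinct powers (exponent ≥ 1) of p ≥ 2 is ≤ 1 -/
lemma sum_inv_pow_le_one {p : ℕ} (hp : 2 ≤ p) {s : Finset ℕ}
    (hs : ∀ r ∈ s, ∃ k, 0 < k ∧ r = p ^ k) : ∑ r ∈ s, (1:ℝ)/r ≤ 1 := by
  have hlog : ∀ r ∈ s, (1:ℝ)/r = (1/2:ℝ)^(Nat.log p r) * ((1/2:ℝ)^(Nat.log p r))⁻¹ * (1/r) := by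
    intro r hr; field_simp
  -- rewrite sum over image of Nat.log
  have himg : ∑ r ∈ s, (1:ℝ)/r ≤ ∑ k ∈ s.image (Nat.log p), (1/2:ℝ)^k := by
    rw [Finset.sum_image ?inj]
    · apply Finset.sum_le_sum
      intro r hr
      obtain ⟨k, hk, rfl⟩ := hs r hr
      rw [Nat.log_pow (by omega)]
      have h1 : (2:ℝ)^k ≤ (p:ℝ)^k := by
        apply pow_le_pow_left₀ (by norm_num)
        exact_mod_cast hp
      have h2 : (0:ℝ) < (p:ℝ)^k := by positivity
      rw [div_pow, one_pow, one_div, one_div]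
      push_cast
      rw [inv_le_inv₀ (by positivity) (by positivity)]
      exact h1
    case inj =>
      intro r hr r' hr' he
      obtain ⟨k, hk, rfl⟩ := hs r hr
      obtain ⟨k', hk', rfl⟩ := hs r' hr'
      rw [Nat.log_pow (by omega), Nat.log_pow (by omega)] at he
      rw [he]
  refine himg.trans ?_
  have hsub : s.image (Nat.log p) ⊆ Finset.Icc 1 ((s.image (Nat.log p)).sup id) := by
    intro k hk
    rw [Finset.mem_Icc]
    constructor
    · obtain ⟨r, hr, rfl⟩ := Finset.mem_image.mp hk
      obtain ⟨j, hj, rfl⟩ := hs r hr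
      rw [Nat.log_pow (by omega)]; omega
    · exact Finset.le_sup (f := id) hk
  calc ∑ k ∈ s.image (Nat.log p), (1/2:ℝ)^k
      ≤ ∑ k ∈ Finset.Icc 1 ((s.image (Nat.log p)).sup id), (1/2:ℝ)^k :=
        Finset.sum_le_sum_of_subset_of_nonneg hsub (fun k _ _ => by positivity)
    _ = 1 - (1/2:ℝ)^((s.image (Nat.log p)).sup id) := geom_half _
    _ ≤ 1 := by
        have : (0:ℝ) < (1/2:ℝ)^((s.image (Nat.log p)).sup id) := by positivity
        linarith

/-- Cauchy–Schwarz: (∑_{q∈s}|g q|)² ≤ (∑_{q∈s} g q²/q)(∑_{q∈s} q) -/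
lemma cs_abs_sum {s : Finset ℕ} (hs : ∀ q ∈ s, 2 ≤ q) :
    (∑ q ∈ s, |g q|)^2 ≤ (∑ q ∈ s, g q^2/q) * (∑ q ∈ s, (q:ℝ)) := by
  have hqpos : ∀ q ∈ s, (0:ℝ) < q := fun q hq => by
    have := hs q hq; positivity
  have := Finset.sum_mul_sq_le_sq_mul_sq s (fun q => |g q| / Real.sqrt q)
    (fun q => Real.sqrt q)
  have heq : ∀ q ∈ s, |g q| / Real.sqrt q * Real.sqrt q = |g q| := by
    intro q hq
    have := hqpos q hq
    field_simp
  rw [Finset.sum_congr rfl heq] at this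
  refine this.trans (le_of_eq ?_)
  congr 1
  · apply Finset.sum_congr rfl
    intro q hq
    rw [div_pow, Real.sq_sqrt (hqpos q hq).le, sq_abs]
  · apply Finset.sum_congr rfl
    intro q hq
    rw [Real.sq_sqrt (hqpos q hq).le]

/-- sum of small prime powers is at most N -/
lemma sum_small_le (N : ℕ) :
    ∑ q ∈ (PP N).filter (fun r => r*r ≤ N), (q:ℝ) ≤ (N:ℝ) := by
  have h1 : ∑ q ∈ (PP N).filter (fun r => r*r ≤ N), q ≤ N := by
    set s := (PP N).filter (fun r => r*r ≤ N) with hs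
    have hb : ∀ q ∈ s, q ≤ Nat.sqrt N := by
      intro q hq
      rw [hs, Finset.mem_filter] at hq
      exact Nat.le_sqrt.mpr hq.2
    have hcard : s.card ≤ Nat.sqrt N := by
      have hsub : s ⊆ Finset.Icc 1 (Nat.sqrt N) := by
        intro q hq
        rw [Finset.mem_Icc]
        refine ⟨?_, hb q hq⟩
        rw [hs, Finset.mem_filter] at hq
        have := (mem_PP.mp hq.1).1; omega
      calc s.card ≤ (Finset.Icc 1 (Nat.sqrt N)).card := Finset.card_le_card hsub
        _ = Nat.sqrt N := by rw [Nat.card_Icc]; omega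
    calc ∑ q ∈ s, q ≤ s.card * Nat.sqrt N := Finset.sum_le_card_nsmul s _ _ hb
      _ ≤ Nat.sqrt N * Nat.sqrt N := Nat.mul_le_mul_right _ hcard
      _ ≤ N := Nat.sqrt_le N
  calc ∑ q ∈ (PP N).filter (fun r => r*r ≤ N), (q:ℝ)
      = ((∑ q ∈ (PP N).filter (fun r => r*r ≤ N), q : ℕ) : ℝ) := by push_cast; rfl
    _ ≤ (N:ℝ) := by exact_mod_cast h1
end S7
namespace S7
variable {g : ℕ → ℝ}

lemma double_sum_sq (I s : Finset ℕ) (F : ℕ → ℕ → ℝ) :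
    ∑ n ∈ I, (∑ q ∈ s, F q n)^2 = ∑ q ∈ s, ∑ q' ∈ s, ∑ n ∈ I, F q n * F q' n := by
  calc ∑ n ∈ I, (∑ q ∈ s, F q n)^2
      = ∑ n ∈ I, ∑ q ∈ s, ∑ q' ∈ s, F q n * F q' n := by
        apply Finset.sum_congr rfl
        intro n _
        rw [sq, Finset.sum_mul_sum]
    _ = ∑ q ∈ s, ∑ n ∈ I, ∑ q' ∈ s, F q n * F q' n := Finset.sum_comm
    _ = ∑ q ∈ s, ∑ q' ∈ s, ∑ n ∈ I, F q n * F q' n := by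
        apply Finset.sum_congr rfl
        intro q _
        exact Finset.sum_comm

noncomputable def U1 (g : ℕ → ℝ) (N q q' : ℕ) : ℝ :=
  if q = q' then g q^2 * (2*(N:ℝ)/q) else 0

noncomputable def U2 (g : ℕ → ℝ) (N q q' : ℕ) : ℝ :=
  if (q ≠ q' ∧ q'.minFac = q.minFac) then (3*(N:ℝ)/2) * ((g q^2 + g q'^2)/((q:ℝ)*q')) else 0

noncomputable def U3 (g : ℕ → ℝ) (q q' : ℕ) : ℝ :=
  if q.minFac ≠ q'.minFac then 8 * |g q| * |g q'| else 0

noncomputable def W (g : ℕ → ℝ) (q q' : ℕ) : ℝ :=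
  if (q ≠ q' ∧ q'.minFac = q.minFac) then g q^2/((q:ℝ)*q') else 0

lemma Ubound (N : ℕ) {q q' : ℕ} (hq : IsPrimePow q) (hq' : IsPrimePow q') :
    g q * g q' * (∑ n ∈ Finset.Icc 1 N, (ee q n - rho q) * (ee q' n - rho q'))
      ≤ U1 g N q q' + U2 g N q q' + U3 g q q' := by
  by_cases h1 : q = q'
  · subst h1
    have hcd := cov_diag N hq
    simp only [U1, U2, U3, if_pos rfl, ne_eq, not_true_eq_false, false_and, if_false,
      not_not, if_neg (fun h : q.minFac ≠ q.minFac => h rfl), if_true]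
    have : g q * g q * (∑ n ∈ Finset.Icc 1 N, (ee q n - rho q) * (ee q n - rho q))
        = g q ^2 * (∑ n ∈ Finset.Icc 1 N, (ee q n - rho q) * (ee q n - rho q)) := by ring
    rw [this]
    have := mul_le_mul_of_nonneg_left hcd (sq_nonneg (g q))
    linarith
  · by_cases h2 : q'.minFac = q.minFac
    · have hcs := cov_same N hq hq' h1 h2
      have hU1 : U1 g N q q' = 0 := by simp [U1, h1]
      have hU3 : U3 g q q' = 0 := by simp [U3, h2.symm]
      have hU2 : U2 g N q q' = (3*(N:ℝ)/2) * ((g q^2 + g q'^2)/((q:ℝ)*q')) := by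
        simp [U2, h1, h2]
      rw [hU1, hU3, hU2, zero_add, add_zero]
      set C := ∑ n ∈ Finset.Icc 1 N, (ee q n - rho q) * (ee q' n - rho q') with hC
      have hqpos : (0:ℝ) < q := by have := hq.two_le; positivity
      have hq'pos : (0:ℝ) < q' := by have := hq'.two_le; positivity
      calc g q * g q' * C ≤ |g q * g q' * C| := le_abs_self _
        _ = |g q| * |g q'| * |C| := by rw [abs_mul, abs_mul]
        _ ≤ |g q| * |g q'| * (3*N/((q:ℝ)*q')) := by
            apply mul_le_mul_of_nonneg_left hcs (by positivity)
        _ ≤ (3*(N:ℝ)/2) * ((g q^2 + g q'^2)/((q:ℝ)*q')) := by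
            have ham : 2 * (|g q| * |g q'|) ≤ g q^2 + g q'^2 := by
              nlinarith [sq_nonneg (|g q| - |g q'|), sq_abs (g q), sq_abs (g q')]
            have hpos : (0:ℝ) < (q:ℝ)*q' := mul_pos hqpos hq'pos
            rw [mul_div_assoc', mul_div_assoc', div_le_div_iff₀ hpos hpos]
            nlinarith [mul_le_mul_of_nonneg_right ham hpos.le, hpos,
              Nat.cast_nonneg (α := ℝ) N, mul_nonneg (abs_nonneg (g q)) (abs_nonneg (g q'))]
    · have hcd := cov_diff N hq hq' (fun h => h2 h.symm)
      have hU1 : U1 g N q q' = 0 := by simp [U1, h1]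
      have hU2 : U2 g N q q' = 0 := by simp [U2, h2]
      have hU3 : U3 g q q' = 8 * |g q| * |g q'| := by
        unfold U3
        rw [if_pos (show q.minFac ≠ q'.minFac from fun h => h2 h.symm)]
      rw [hU1, hU2, hU3, zero_add, zero_add]
      set C := ∑ n ∈ Finset.Icc 1 N, (ee q n - rho q) * (ee q' n - rho q') with hC
      calc g q * g q' * C ≤ |g q * g q' * C| := le_abs_self _
        _ = |g q| * |g q'| * |C| := by rw [abs_mul, abs_mul]
        _ ≤ |g q| * |g q'| * 8 := by
            apply mul_le_mul_of_nonneg_left hcd (by positivity)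
        _ = 8 * |g q| * |g q'| := by ring
end S7
namespace S7
variable {g : ℕ → ℝ}

lemma PP_pp {N q : ℕ} (h : q ∈ PP N) : IsPrimePow q := (mem_PP.mp h).2.2

lemma B2_term_nonneg {N : ℕ} : ∀ q ∈ PP N, (0:ℝ) ≤ g q^2/(q:ℝ) := by
  intro q hq
  have := (mem_PP.mp hq).1
  positivity

lemma sumU1 (N : ℕ) :
    ∑ q ∈ (PP N).filter (fun r => r*r ≤ N), ∑ q' ∈ (PP N).filter (fun r => r*r ≤ N), U1 g N q q'
      ≤ 2 * N * ∑ q ∈ PP N, g q^2/q := by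
  set Ps := (PP N).filter (fun r => r*r ≤ N) with hPs
  have hinner : ∀ q ∈ Ps, ∑ q' ∈ Ps, U1 g N q q' = g q^2 * (2*(N:ℝ)/q) := by
    intro q hq
    unfold U1
    rw [Finset.sum_ite_eq Ps q (fun _ => g q^2 * (2*(N:ℝ)/q)), if_pos hq]
  rw [Finset.sum_congr rfl hinner]
  calc ∑ q ∈ Ps, g q^2 * (2*(N:ℝ)/q) = 2*N * ∑ q ∈ Ps, g q^2/q := by
        rw [Finset.mul_sum]
        apply Finset.sum_congr rfl
        intros; ring
    _ ≤ 2*N * ∑ q ∈ PP N, g q^2/q := by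
        apply mul_le_mul_of_nonneg_left _ (by positivity)
        apply Finset.sum_le_sum_of_subset_of_nonneg (Finset.filter_subset _ _)
        intro q hq _
        exact B2_term_nonneg q hq

lemma U2_eq_W (N q q' : ℕ) : U2 g N q q' = (3*(N:ℝ)/2) * (W g q q' + W g q' q) := by
  by_cases h : q ≠ q' ∧ q'.minFac = q.minFac
  · have h' : q' ≠ q ∧ q.minFac = q'.minFac := ⟨h.1.symm, h.2.symm⟩
    unfold U2 W
    rw [if_pos h, if_pos h, if_pos h']
    ring
  · have h' : ¬(q' ≠ q ∧ q.minFac = q'.minFac) := fun hc => h ⟨hc.1.symm, hc.2.symm⟩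
    unfold U2 W
    rw [if_neg h, if_neg h, if_neg h']
    ring

lemma sumW (N : ℕ) :
    ∑ q ∈ (PP N).filter (fun r => r*r ≤ N), ∑ q' ∈ (PP N).filter (fun r => r*r ≤ N), W g q q'
      ≤ ∑ q ∈ PP N, g q^2/q := by
  set Ps := (PP N).filter (fun r => r*r ≤ N) with hPs
  have hinner : ∀ q ∈ Ps, ∑ q' ∈ Ps, W g q q' ≤ g q^2/q := by
    intro q hq
    have hqpp : IsPrimePow q := PP_pp (Finset.mem_filter.mp hq).1
    have hq2 : (2:ℝ) ≤ q := by exact_mod_cast hqpp.two_le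
    unfold W
    rw [← Finset.sum_filter]
    set t := Ps.filter (fun q' => q ≠ q' ∧ q'.minFac = q.minFac) with ht
    have hstep : ∑ q' ∈ t, g q^2/((q:ℝ)*q') = (g q^2/q) * ∑ q' ∈ t, (1:ℝ)/q' := by
      rw [Finset.mul_sum]
      apply Finset.sum_congr rfl
      intro q' hq'
      have hq'pp : IsPrimePow q' := PP_pp (Finset.mem_filter.mp (Finset.mem_filter.mp hq').1).1
      have hq'2 : (2:ℝ) ≤ q' := by exact_mod_cast hq'pp.two_le
      field_simp
    rw [hstep]
    have hgeo : ∑ q' ∈ t, (1:ℝ)/q' ≤ 1 := by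
      apply sum_inv_pow_le_one (pp_minFac_prime hqpp).two_le
      intro r hr
      rw [ht, Finset.mem_filter] at hr
      have hrpp : IsPrimePow r := PP_pp (Finset.mem_filter.mp hr.1).1
      obtain ⟨k, hk, hre⟩ := pp_struct hrpp
      exact ⟨k, hk, by rw [← hr.2.2]; exact hre⟩
    calc (g q^2/(q:ℝ)) * ∑ q' ∈ t, (1:ℝ)/q' ≤ (g q^2/q) * 1 :=
          mul_le_mul_of_nonneg_left hgeo (by positivity)
      _ = g q^2/q := mul_one _
  calc ∑ q ∈ Ps, ∑ q' ∈ Ps, W g q q' ≤ ∑ q ∈ Ps, g q^2/q := Finset.sum_le_sum hinner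
    _ ≤ ∑ q ∈ PP N, g q^2/q :=
        Finset.sum_le_sum_of_subset_of_nonneg (Finset.filter_subset _ _)
          (fun q hq _ => B2_term_nonneg q hq)

lemma sumU2 (N : ℕ) :
    ∑ q ∈ (PP N).filter (fun r => r*r ≤ N), ∑ q' ∈ (PP N).filter (fun r => r*r ≤ N), U2 g N q q'
      ≤ 3 * N * ∑ q ∈ PP N, g q^2/q := by
  set Ps := (PP N).filter (fun r => r*r ≤ N) with hPs
  have h1 : ∑ q ∈ Ps, ∑ q' ∈ Ps, U2 g N q q'
      = (3*(N:ℝ)/2) * ((∑ q ∈ Ps, ∑ q' ∈ Ps, W g q q') + ∑ q ∈ Ps, ∑ q' ∈ Ps, W g q' q) := by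
    simp_rw [U2_eq_W]
    have hstep : ∀ q ∈ Ps, ∑ q' ∈ Ps, (3*(N:ℝ)/2) * (W g q q' + W g q' q)
        = (3*(N:ℝ)/2) * ((∑ q' ∈ Ps, W g q q') + ∑ q' ∈ Ps, W g q' q) := by
      intro q _
      rw [← Finset.mul_sum, Finset.sum_add_distrib]
    rw [Finset.sum_congr rfl hstep, ← Finset.mul_sum, Finset.sum_add_distrib]
  have h2 : ∑ q ∈ Ps, ∑ q' ∈ Ps, W g q' q = ∑ q ∈ Ps, ∑ q' ∈ Ps, W g q q' := Finset.sum_comm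
  rw [h1, h2]
  have h3 := sumW (g := g) N
  have hB2 : (0:ℝ) ≤ ∑ q ∈ PP N, g q^2/q := Finset.sum_nonneg B2_term_nonneg
  calc (3*(N:ℝ)/2) * ((∑ q ∈ Ps, ∑ q' ∈ Ps, W g q q') + ∑ q ∈ Ps, ∑ q' ∈ Ps, W g q q')
      ≤ (3*(N:ℝ)/2) * ((∑ q ∈ PP N, g q^2/q) + ∑ q ∈ PP N, g q^2/q) := by
        apply mul_le_mul_of_nonneg_left _ (by positivity)
        exact add_le_add h3 h3
    _ = 3 * N * ∑ q ∈ PP N, g q^2/q := by ring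

lemma sumU3 (N : ℕ) :
    ∑ q ∈ (PP N).filter (fun r => r*r ≤ N), ∑ q' ∈ (PP N).filter (fun r => r*r ≤ N), U3 g q q'
      ≤ 8 * N * ∑ q ∈ PP N, g q^2/q := by
  set Ps := (PP N).filter (fun r => r*r ≤ N) with hPs
  have hpt : ∀ q ∈ Ps, ∀ q' ∈ Ps, U3 g q q' ≤ 8 * |g q| * |g q'| := by
    intro q _ q' _
    unfold U3
    split
    · exact le_refl _
    · positivity
  have h2le : ∀ q ∈ Ps, 2 ≤ q := by
    intro q hq
    exact (mem_PP.mp (Finset.mem_filter.mp hq).1).1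
  have hB2 : ∑ q ∈ Ps, g q^2/q ≤ ∑ q ∈ PP N, g q^2/q :=
    Finset.sum_le_sum_of_subset_of_nonneg (Finset.filter_subset _ _)
      (fun q hq _ => B2_term_nonneg q hq)
  have hcs := cs_abs_sum (g := g) h2le
  have hsq := sum_small_le (N := N)
  have habs0 : (0:ℝ) ≤ ∑ q ∈ Ps, |g q| := Finset.sum_nonneg (fun q _ => abs_nonneg _)
  have ht0 : (0:ℝ) ≤ ∑ q ∈ Ps, g q^2/q := Finset.sum_nonneg (fun q hq =>
    B2_term_nonneg q (Finset.mem_filter.mp hq).1)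
  calc ∑ q ∈ Ps, ∑ q' ∈ Ps, U3 g q q'
      ≤ ∑ q ∈ Ps, ∑ q' ∈ Ps, 8 * |g q| * |g q'| :=
        Finset.sum_le_sum (fun q hq => Finset.sum_le_sum (hpt q hq))
    _ = 8 * ((∑ q ∈ Ps, |g q|) * (∑ q ∈ Ps, |g q|)) := by
        rw [Finset.sum_mul_sum, Finset.mul_sum]
        apply Finset.sum_congr rfl
        intro q _
        rw [Finset.mul_sum]
        apply Finset.sum_congr rfl
        intro q' _
        ring
    _ = 8 * ((∑ q ∈ Ps, |g q|)^2) := by ring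
    _ ≤ 8 * ((∑ q ∈ Ps, g q^2/q) * (∑ q ∈ Ps, (q:ℝ))) := by
        apply mul_le_mul_of_nonneg_left hcs (by norm_num)
    _ ≤ 8 * ((∑ q ∈ PP N, g q^2/q) * (N:ℝ)) := by
        apply mul_le_mul_of_nonneg_left _ (by norm_num)
        apply mul_le_mul hB2 hsq (Finset.sum_nonneg (fun q hq => by
          have := h2le q hq
          positivity)) (Finset.sum_nonneg B2_term_nonneg)
    _ = 8 * N * ∑ q ∈ PP N, g q^2/q := by ring

end S7
namespace S7
variable {g : ℕ → ℝ}

lemma small_var (N : ℕ) :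
    ∑ n ∈ Finset.Icc 1 N, (∑ q ∈ (PP N).filter (fun r => r*r ≤ N), g q * (ee q n - rho q))^2
      ≤ 13 * N * ∑ q ∈ PP N, g q^2/q := by
  set Ps := (PP N).filter (fun r => r*r ≤ N) with hPs
  rw [double_sum_sq]
  have hterm : ∀ q ∈ Ps, ∀ q' ∈ Ps,
      (∑ n ∈ Finset.Icc 1 N, (g q * (ee q n - rho q)) * (g q' * (ee q' n - rho q')))
        ≤ U1 g N q q' + U2 g N q q' + U3 g q q' := by
    intro q hq q' hq'
    have hqpp : IsPrimePow q := PP_pp (Finset.mem_filter.mp hq).1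
    have hq'pp : IsPrimePow q' := PP_pp (Finset.mem_filter.mp hq').1
    have heq : (∑ n ∈ Finset.Icc 1 N, (g q * (ee q n - rho q)) * (g q' * (ee q' n - rho q')))
        = g q * g q' * ∑ n ∈ Finset.Icc 1 N, (ee q n - rho q) * (ee q' n - rho q') := by
      rw [Finset.mul_sum]
      apply Finset.sum_congr rfl
      intros; ring
    rw [heq]
    exact Ubound N hqpp hq'pp
  calc ∑ q ∈ Ps, ∑ q' ∈ Ps,
        ∑ n ∈ Finset.Icc 1 N, (g q * (ee q n - rho q)) * (g q' * (ee q' n - rho q'))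
      ≤ ∑ q ∈ Ps, ∑ q' ∈ Ps, (U1 g N q q' + U2 g N q q' + U3 g q q') :=
        Finset.sum_le_sum (fun q hq => Finset.sum_le_sum (fun q' hq' => hterm q hq q' hq'))
    _ = (∑ q ∈ Ps, ∑ q' ∈ Ps, U1 g N q q') + (∑ q ∈ Ps, ∑ q' ∈ Ps, U2 g N q q')
        + (∑ q ∈ Ps, ∑ q' ∈ Ps, U3 g q q') := by
        simp_rw [Finset.sum_add_distrib]
    _ ≤ 2 * N * (∑ q ∈ PP N, g q^2/q) + 3 * N * (∑ q ∈ PP N, g q^2/q)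
        + 8 * N * (∑ q ∈ PP N, g q^2/q) := by
        have := sumU1 (g := g) N
        have := sumU2 (g := g) N
        have := sumU3 (g := g) N
        gcongr <;> linarith
    _ = 13 * N * ∑ q ∈ PP N, g q^2/q := by ring

lemma large_var (N : ℕ) :
    ∑ n ∈ Finset.Icc 1 N, (∑ q ∈ (PP N).filter (fun r => ¬ r*r ≤ N), g q * ee q n)^2
      ≤ N * ∑ q ∈ PP N, g q^2/q := by
  set Pl := (PP N).filter (fun r => ¬ r*r ≤ N) with hPl
  rw [double_sum_sq]
  have hoff : ∀ q ∈ Pl, ∀ q' ∈ Pl, q' ≠ q →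
      ∑ n ∈ Finset.Icc 1 N, (g q * ee q n) * (g q' * ee q' n) = 0 := by
    intro q hq q' hq' hne
    have hqpp : IsPrimePow q := PP_pp (Finset.mem_filter.mp hq).1
    have hq'pp : IsPrimePow q' := PP_pp (Finset.mem_filter.mp hq').1
    have hqbig : ¬ q*q ≤ N := (Finset.mem_filter.mp hq).2
    have hq'big : ¬ q'*q' ≤ N := (Finset.mem_filter.mp hq').2
    apply Finset.sum_eq_zero
    intro n hn
    rw [Finset.mem_Icc] at hn
    have hee : ee q n * ee q' n = 0 := by
      by_cases hmf : q'.minFac = q.minFac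
      · exact ee_mul_ee_same hqpp hq'pp (fun h => hne h.symm) hmf
      · rw [ee_eq_ite, ee_eq_ite]
        by_cases c1 : q ∣ n ∧ ¬ (q * q.minFac ∣ n)
        · by_cases c2 : q' ∣ n ∧ ¬ (q' * q'.minFac ∣ n)
          · exfalso
            have hcop : Nat.Coprime q q' := by
              obtain ⟨k, hk, hqe⟩ := pp_struct hqpp
              obtain ⟨k', hk', hqe'⟩ := pp_struct hq'pp
              rw [hqe, hqe']
              exact pp_pow_coprime hqpp hq'pp (fun h => hmf h.symm)
            have hdvd : q * q' ∣ n := hcop.mul_dvd_of_dvd_of_dvd c1.1 c2.1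
            have hle : q * q' ≤ n := Nat.le_of_dvd (by omega) hdvd
            have h3 : q * q' ≤ N := le_trans hle hn.2
            have h1 : N < q*q := not_le.mp hqbig
            have h2 : N < q'*q' := not_le.mp hq'big
            have h4 : (q*q')*(q*q') ≤ N*N := Nat.mul_le_mul h3 h3
            have h5 : N*N < (q*q)*(q'*q') := Nat.mul_lt_mul'' h1 h2
            have h6 : (q*q)*(q'*q') = (q*q')*(q*q') := by ring
            omega
          · simp [c1, c2]
        · simp [c1]
    calc (g q * ee q n) * (g q' * ee q' n) = g q * g q' * (ee q n * ee q' n) := by ring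
      _ = 0 := by rw [hee, mul_zero]
  have hdiag : ∀ q ∈ Pl,
      ∑ q' ∈ Pl, ∑ n ∈ Finset.Icc 1 N, (g q * ee q n) * (g q' * ee q' n)
        = ∑ n ∈ Finset.Icc 1 N, (g q * ee q n) * (g q * ee q n) := by
    intro q hq
    exact Finset.sum_eq_single_of_mem q hq (fun q' hq' hne => hoff q hq q' hq' hne)
  rw [Finset.sum_congr rfl hdiag]
  have hterm : ∀ q ∈ Pl,
      ∑ n ∈ Finset.Icc 1 N, (g q * ee q n) * (g q * ee q n) ≤ N * (g q^2/q) := by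
    intro q hq
    have hqpp : IsPrimePow q := PP_pp (Finset.mem_filter.mp hq).1
    have hq2 : (2:ℝ) ≤ q := by exact_mod_cast hqpp.two_le
    have heq : ∑ n ∈ Finset.Icc 1 N, (g q * ee q n) * (g q * ee q n)
        = g q^2 * ∑ n ∈ Finset.Icc 1 N, ee q n * ee q n := by
      rw [Finset.mul_sum]
      apply Finset.sum_congr rfl
      intros; ring
    rw [heq]
    calc g q^2 * ∑ n ∈ Finset.Icc 1 N, ee q n * ee q n
        ≤ g q^2 * ((N:ℝ)/q) := mul_le_mul_of_nonneg_left (sum_ee_sq_le N q) (sq_nonneg _)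
      _ = N * (g q^2/q) := by ring
  calc ∑ q ∈ Pl, ∑ n ∈ Finset.Icc 1 N, (g q * ee q n) * (g q * ee q n)
      ≤ ∑ q ∈ Pl, (N:ℝ) * (g q^2/q) := Finset.sum_le_sum hterm
    _ = N * ∑ q ∈ Pl, g q^2/q := by rw [Finset.mul_sum]
    _ ≤ N * ∑ q ∈ PP N, g q^2/q := by
        apply mul_le_mul_of_nonneg_left _ (by positivity)
        exact Finset.sum_le_sum_of_subset_of_nonneg (Finset.filter_subset _ _)
          (fun q hq _ => B2_term_nonneg q hq)

theorem variance (hg : IsAdditiveR g) (N : ℕ) :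
    ∑ n ∈ Finset.Icc 1 N,
        (g n - ∑ q ∈ (PP N).filter (fun r => r*r ≤ N), g q * rho q)^2
      ≤ 28 * N * ∑ q ∈ PP N, g q^2/q := by
  set Ps := (PP N).filter (fun r => r*r ≤ N) with hPs
  set Pl := (PP N).filter (fun r => ¬ r*r ≤ N) with hPl
  set c := ∑ q ∈ Ps, g q * rho q with hc
  have hdecomp : ∀ n ∈ Finset.Icc 1 N, g n - c
      = (∑ q ∈ Ps, g q * (ee q n - rho q)) + ∑ q ∈ Pl, g q * ee q n := by
    intro n hn
    rw [Finset.mem_Icc] at hn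
    have hg_eq := g_decomp hg (show n ≠ 0 by omega) hn.2
    have hsplit := Finset.sum_filter_add_sum_filter_not (PP N) (fun r => r*r ≤ N)
      (fun q => g q * ee q n)
    have hPsum : ∑ q ∈ Ps, g q * (ee q n - rho q) = (∑ q ∈ Ps, g q * ee q n) - c := by
      rw [hc, ← Finset.sum_sub_distrib]
      apply Finset.sum_congr rfl
      intros; ring
    rw [hPsum]
    rw [hg_eq, ← hsplit]
    ring
  have hsq : ∀ n ∈ Finset.Icc 1 N, (g n - c)^2
      ≤ 2*(∑ q ∈ Ps, g q * (ee q n - rho q))^2 + 2*(∑ q ∈ Pl, g q * ee q n)^2 := by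
    intro n hn
    rw [hdecomp n hn]
    nlinarith [sq_nonneg ((∑ q ∈ Ps, g q * (ee q n - rho q)) - ∑ q ∈ Pl, g q * ee q n)]
  calc ∑ n ∈ Finset.Icc 1 N, (g n - c)^2
      ≤ ∑ n ∈ Finset.Icc 1 N, (2*(∑ q ∈ Ps, g q * (ee q n - rho q))^2
          + 2*(∑ q ∈ Pl, g q * ee q n)^2) := Finset.sum_le_sum hsq
    _ = 2*(∑ n ∈ Finset.Icc 1 N, (∑ q ∈ Ps, g q * (ee q n - rho q))^2)
        + 2*(∑ n ∈ Finset.Icc 1 N, (∑ q ∈ Pl, g q * ee q n)^2) := by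
        rw [Finset.sum_add_distrib, Finset.mul_sum, Finset.mul_sum]
    _ ≤ 2*(13 * N * ∑ q ∈ PP N, g q^2/q) + 2*(N * ∑ q ∈ PP N, g q^2/q) := by
        have h1 := small_var (g := g) N
        have h2 := large_var (g := g) N
        gcongr <;> linarith
    _ = 28 * N * ∑ q ∈ PP N, g q^2/q := by ring
end S7

set_option maxHeartbeats 1000000 in
/-- If `𝓑(X) = {n ≤ X : g(n) < g(n-1)}`, then
`(1/X) ∑_{n ≤ X} |g(n) - g(n-1)| ≪ ((|𝓑(X)|/X)^{1/2} + (log X)/√X) B_g(X)`. -/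
theorem stmt7 :
    ∃ C : ℝ, 0 < C ∧ ∀ (g : ℕ → ℝ), IsAdditiveR g → g 0 = 0 → ∀ X : ℝ, 3 ≤ X →
      (1 / X) * ∑ n ∈ Finset.Icc 1 ⌊X⌋₊, |g n - g (n - 1)|
        ≤ C * (Real.sqrt ((((Finset.Icc 1 ⌊X⌋₊).filter
              (fun n => g n < g (n - 1))).card : ℝ) / X)
            + Real.log X / Real.sqrt X) * BgR g X := by
  refine ⟨100, by norm_num, ?_⟩
  intro g hg hg0 X hX
  set N := ⌊X⌋₊ with hN
  have hXpos : (0:ℝ) < X := by linarith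
  have hN3 : 3 ≤ N := Nat.le_floor (by exact_mod_cast hX)
  have hNX : (N:ℝ) ≤ X := Nat.floor_le hXpos.le
  have hppows : ppows X = S7.PP N := rfl
  set B2 : ℝ := ∑ q ∈ S7.PP N, g q^2/q with hB2def
  have hB2nonneg : 0 ≤ B2 := Finset.sum_nonneg S7.B2_term_nonneg
  have hBdef : BgR g X = Real.sqrt B2 := by rw [BgR, hppows]
  set B : ℝ := BgR g X with hB
  have hB0 : 0 ≤ B := by rw [hBdef]; positivity
  have hBsq : B^2 = B2 := by rw [hBdef]; exact Real.sq_sqrt hB2nonneg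
  set c : ℝ := ∑ q ∈ (S7.PP N).filter (fun r => r*r ≤ N), g q * S7.rho q with hc
  set T : ℝ := ∑ n ∈ Finset.Icc 1 N, (g n - c)^2 with hT
  have hTbound : T ≤ 28 * N * B2 := S7.variance hg N
  have hT0 : 0 ≤ T := Finset.sum_nonneg (fun n _ => sq_nonneg _)
  set 𝓑 := (Finset.Icc 1 N).filter (fun n => g n < g (n - 1)) with h𝓑
  set K : ℝ := (𝓑.card : ℝ) with hK
  have hK0 : 0 ≤ K := by positivity
  -- absolute value identity
  have habs : ∀ n : ℕ, |g n - g (n-1)|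
      = (g n - g (n-1)) + 2*(if g n < g (n-1) then g (n-1) - g n else 0) := by
    intro n
    by_cases h : g n < g (n-1)
    · rw [if_pos h, abs_of_neg (by linarith)]; ring
    · rw [if_neg h, abs_of_nonneg (by linarith [not_lt.mp h])]; ring
  have hsum : ∑ n ∈ Finset.Icc 1 N, |g n - g (n-1)|
      = (∑ n ∈ Finset.Icc 1 N, (g n - g (n-1))) + 2*∑ n ∈ 𝓑, (g (n-1) - g n) := by
    rw [h𝓑, Finset.sum_filter, Finset.mul_sum, ← Finset.sum_add_distrib]
    apply Finset.sum_congr rfl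
    intro n _
    rw [habs n, mul_ite, mul_zero]
  -- telescoping
  have htel : ∀ M : ℕ, ∑ n ∈ Finset.Icc 1 M, (g n - g (n-1)) = g M - g 0 := by
    intro M
    induction M with
    | zero => simp
    | succ M ih =>
      rw [Finset.sum_Icc_succ_top (by omega), ih]
      simp
  -- 𝓑 ⊆ [2, N]
  have hsub𝓑 : 𝓑 ⊆ Finset.Icc 2 N := by
    intro n hn
    rw [h𝓑, Finset.mem_filter, Finset.mem_Icc] at hn
    rw [Finset.mem_Icc]
    rcases Nat.lt_or_ge n 2 with h2 | h2
    · exfalso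
      have hn1 : n = 1 := by omega
      rw [hn1] at hn
      have h3 : g 1 < g 0 := by
        have := hn.2
        norm_num at this
        exact this
      rw [S7.g_one hg, hg0] at h3
      linarith
    · exact ⟨h2, hn.1.2⟩
  -- Cauchy-Schwarz: ∑_𝓑 |g n - c| ≤ √K √T
  have hCS1 : ∑ n ∈ 𝓑, |g n - c| ≤ Real.sqrt K * Real.sqrt T := by
    have h := Finset.sum_mul_sq_le_sq_mul_sq 𝓑 (fun _ => (1:ℝ)) (fun n => |g n - c|)
    simp only [one_mul, one_pow, Finset.sum_const, nsmul_eq_mul, mul_one, sq_abs] at h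
    have hTsub : ∑ n ∈ 𝓑, (g n - c)^2 ≤ T := by
      rw [hT]
      apply Finset.sum_le_sum_of_subset_of_nonneg
      · rw [h𝓑]; exact Finset.filter_subset _ _
      · intro n _ _; exact sq_nonneg _
    have h0 : 0 ≤ ∑ n ∈ 𝓑, |g n - c| := Finset.sum_nonneg (fun n _ => abs_nonneg _)
    calc ∑ n ∈ 𝓑, |g n - c| = Real.sqrt ((∑ n ∈ 𝓑, |g n - c|)^2) := (Real.sqrt_sq h0).symm
      _ ≤ Real.sqrt (K * T) := Real.sqrt_le_sqrt (by nlinarith)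
      _ = Real.sqrt K * Real.sqrt T := Real.sqrt_mul hK0 T
  have hCS2 : ∑ n ∈ 𝓑, |g (n-1) - c| ≤ Real.sqrt K * Real.sqrt T := by
    have h := Finset.sum_mul_sq_le_sq_mul_sq 𝓑 (fun _ => (1:ℝ)) (fun n => |g (n-1) - c|)
    simp only [one_mul, one_pow, Finset.sum_const, nsmul_eq_mul, mul_one, sq_abs] at h
    have hinj : ∀ n ∈ 𝓑, ∀ n' ∈ 𝓑, n - 1 = n' - 1 → n = n' := by
      intro n hn n' hn' he
      have h1 := Finset.mem_Icc.mp (hsub𝓑 hn)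
      have h2 := Finset.mem_Icc.mp (hsub𝓑 hn')
      omega
    have hTsub : ∑ n ∈ 𝓑, (g (n-1) - c)^2 ≤ T := by
      have himg : ∑ n ∈ 𝓑, (g (n-1) - c)^2
          = ∑ m ∈ 𝓑.image (· - 1), (g m - c)^2 :=
            (Finset.sum_image (f := fun m => (g m - c)^2) hinj).symm
      rw [himg, hT]
      apply Finset.sum_le_sum_of_subset_of_nonneg
      · intro m hm
        obtain ⟨n, hn, rfl⟩ := Finset.mem_image.mp hm
        have h1 := Finset.mem_Icc.mp (hsub𝓑 hn)
        rw [Finset.mem_Icc]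
        omega
      · intro n _ _; exact sq_nonneg _
    have h0 : 0 ≤ ∑ n ∈ 𝓑, |g (n-1) - c| := Finset.sum_nonneg (fun n _ => abs_nonneg _)
    calc ∑ n ∈ 𝓑, |g (n-1) - c| = Real.sqrt ((∑ n ∈ 𝓑, |g (n-1) - c|)^2) :=
          (Real.sqrt_sq h0).symm
      _ ≤ Real.sqrt (K * T) := Real.sqrt_le_sqrt (by nlinarith)
      _ = Real.sqrt K * Real.sqrt T := Real.sqrt_mul hK0 T
  -- pointwise bound inside 𝓑 sum
  have hc1 : ∑ n ∈ 𝓑, (g (n-1) - g n)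
      ≤ (∑ n ∈ 𝓑, |g (n-1) - c|) + ∑ n ∈ 𝓑, |g n - c| := by
    rw [← Finset.sum_add_distrib]
    apply Finset.sum_le_sum
    intro n _
    have h1 := le_abs_self (g (n-1) - c)
    have h2 := neg_abs_le (g n - c)
    linarith
  -- |g N| bound
  have hgN : |g N| ≤ Real.sqrt B2 * Real.sqrt N :=
    S7.g_point_bound hg (by omega) (le_refl N)
  -- combine
  have hM : ∑ n ∈ Finset.Icc 1 N, |g n - g (n-1)|
      ≤ Real.sqrt B2 * Real.sqrt N + 4 * (Real.sqrt K * Real.sqrt T) := by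
    rw [hsum, htel N, hg0, sub_zero]
    have := le_abs_self (g N)
    linarith
  -- bound sqrt T
  have hsqrtT : Real.sqrt T ≤ Real.sqrt 28 * Real.sqrt X * Real.sqrt B2 := by
    have h1 : T ≤ 28 * X * B2 := by
      have h2 : 28 * (N:ℝ) * B2 ≤ 28 * X * B2 := by
        apply mul_le_mul_of_nonneg_right _ hB2nonneg
        linarith
      linarith
    calc Real.sqrt T ≤ Real.sqrt (28 * X * B2) := Real.sqrt_le_sqrt h1
      _ = Real.sqrt (28*X) * Real.sqrt B2 := Real.sqrt_mul (by positivity) _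
      _ = Real.sqrt 28 * Real.sqrt X * Real.sqrt B2 := by
          rw [Real.sqrt_mul (by norm_num : (0:ℝ) ≤ 28)]
  have hsqrtN : Real.sqrt N ≤ Real.sqrt X := Real.sqrt_le_sqrt hNX
  have h28 : Real.sqrt 28 ≤ 5.5 := by
    calc Real.sqrt 28 ≤ Real.sqrt (5.5^2) := Real.sqrt_le_sqrt (by norm_num)
      _ = 5.5 := Real.sqrt_sq (by norm_num)
  have hlog : 1 ≤ Real.log X := by
    rw [← Real.log_exp 1]
    apply Real.log_le_log (Real.exp_pos 1)
    calc Real.exp 1 ≤ 2.7182818286 := Real.exp_one_lt_d9.le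
      _ ≤ X := by linarith
  have hsX0 : 0 < Real.sqrt X := Real.sqrt_pos.mpr hXpos
  have hXX : Real.sqrt X * Real.sqrt X = X := Real.mul_self_sqrt hXpos.le
  have hsB2 : Real.sqrt B2 = B := hBdef.symm
  have hsK0 : 0 ≤ Real.sqrt K := Real.sqrt_nonneg K
  rw [one_div, inv_mul_le_iff₀ hXpos]
  have e1 : X * Real.sqrt (K/X) = Real.sqrt X * Real.sqrt K := by
    rw [Real.sqrt_div hK0 X]
    calc X * (Real.sqrt K/Real.sqrt X) = (X/Real.sqrt X) * Real.sqrt K := by ring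
      _ = Real.sqrt X * Real.sqrt K := by rw [Real.div_sqrt]
  have e2 : X * (Real.log X / Real.sqrt X) = Real.sqrt X * Real.log X := by
    calc X * (Real.log X/Real.sqrt X) = (X/Real.sqrt X) * Real.log X := by ring
      _ = Real.sqrt X * Real.log X := by rw [Real.div_sqrt]
  have expand : X * (100 * (Real.sqrt (K/X) + Real.log X / Real.sqrt X) * B)
      = 100*B*(X * Real.sqrt (K/X)) + 100*B*(X * (Real.log X / Real.sqrt X)) := by ring
  rw [expand, e1, e2]
  -- chain
  have hMX : ∑ n ∈ Finset.Icc 1 N, |g n - g (n-1)|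
      ≤ B*Real.sqrt X + 22*(Real.sqrt K*Real.sqrt X*B) := by
    have s1 : Real.sqrt B2 * Real.sqrt N ≤ B * Real.sqrt X := by
      rw [hsB2]
      exact mul_le_mul_of_nonneg_left hsqrtN hB0
    have s2 : Real.sqrt T ≤ 5.5*(Real.sqrt X*B) := by
      rw [hsB2] at hsqrtT
      refine hsqrtT.trans ?_
      calc Real.sqrt 28*Real.sqrt X*B = Real.sqrt 28*(Real.sqrt X*B) := by ring
        _ ≤ 5.5*(Real.sqrt X*B) :=
            mul_le_mul_of_nonneg_right h28 (mul_nonneg hsX0.le hB0)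
    have s3 : 4*(Real.sqrt K*Real.sqrt T) ≤ 22*(Real.sqrt K*Real.sqrt X*B) := by
      calc 4*(Real.sqrt K*Real.sqrt T) ≤ 4*(Real.sqrt K*(5.5*(Real.sqrt X*B))) := by
            apply mul_le_mul_of_nonneg_left _ (by norm_num)
            exact mul_le_mul_of_nonneg_left s2 hsK0
        _ = 22*(Real.sqrt K*Real.sqrt X*B) := by ring
    have s4 : 0 ≤ Real.sqrt T := Real.sqrt_nonneg T
    linarith [hM]
  have f1 : B*Real.sqrt X ≤ 100*B*(Real.sqrt X*Real.log X) := by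
    have h1 : B*Real.sqrt X*1 ≤ B*Real.sqrt X*Real.log X :=
      mul_le_mul_of_nonneg_left hlog (mul_nonneg hB0 hsX0.le)
    nlinarith [mul_nonneg (mul_nonneg hB0 hsX0.le) (le_trans zero_le_one hlog)]
  have f2 : 22*(Real.sqrt K*Real.sqrt X*B) ≤ 100*B*(Real.sqrt X*Real.sqrt K) := by
    nlinarith [mul_nonneg (mul_nonneg hsK0 hsX0.le) hB0]
  linarith
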